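/- Let A, B, C, D, F, G, E be compatible matrices over ℂ (or H). If A X + Y B + C Z₁ D + F Z₂ G = E is solvable, then rank of the block matrix [E A C; B 0 0; G 0 0] equals rank [A C] + rank [B; G]. -/

import Mathlib

open Matrix

/-- A submodule product has finrank equal to the sum of finranks. -/
lemma finrank_submodule_prod {K M N : Type*} [Field K] [AddCommGroup M] [Module K M]
    [AddCommGroup N] [Module K N] [FiniteDimensional K M] [FiniteDimensional K N]
    (p : Submodule K M) (q : Submodule K N) :
    Module.finrank K (p.prod q) = Module.finrank K p + Module.finrank K q := by
  have e : (p.prod q) ≃ₗ[K] p × q :=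
    { toFun := fun x => (⟨x.1.1, x.2.1⟩, ⟨x.1.2, x.2.2⟩)
      invFun := fun x => ⟨(x.1.1, x.2.1), ⟨x.1.2, x.2.2⟩⟩
      map_add' := fun _ _ => rfl
      map_smul' := fun _ _ => rfl
      left_inv := fun _ => rfl
      right_inv := fun _ => rfl }
  rw [e.finrank_eq, Module.finrank_prod]

lemma range_prodMap' {K M N M' N' : Type*} [Field K]
    [AddCommGroup M] [Module K M] [AddCommGroup N] [Module K N]
    [AddCommGroup M'] [Module K M'] [AddCommGroup N'] [Module K N']
    (f : M →ₗ[K] M') (g : N →ₗ[K] N') :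
    LinearMap.range (f.prodMap g) = (LinearMap.range f).prod (LinearMap.range g) := by
  ext ⟨a, b⟩
  constructor
  · rintro ⟨⟨x, y⟩, h⟩
    obtain ⟨h1, h2⟩ := Prod.mk.injEq .. ▸ h
    exact ⟨⟨x, h1⟩, ⟨y, h2⟩⟩
  · rintro ⟨⟨x, hx⟩, ⟨y, hy⟩⟩
    exact ⟨(x, y), by simp [hx, hy]⟩

/-- The rank of an antidiagonal block matrix is the sum of the ranks of the blocks. -/
lemma rank_fromBlocks_antidiag {m n o p : Type*} [Fintype m] [Fintype n] [Fintype o] [Fintype p]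
    (M : Matrix m p ℂ) (N : Matrix o n ℂ) :
    (fromBlocks (0 : Matrix m n ℂ) M N 0).rank = M.rank + N.rank := by
  classical
  let e1 := LinearEquiv.sumArrowLequivProdArrow n p ℂ ℂ
  let e2 := LinearEquiv.sumArrowLequivProdArrow m o ℂ ℂ
  let sw := LinearEquiv.prodComm ℂ (n → ℂ) (p → ℂ)
  have hF : (fromBlocks (0 : Matrix m n ℂ) M N 0).mulVecLin =
      e2.symm.toLinearMap ∘ₗ (M.mulVecLin.prodMap N.mulVecLin) ∘ₗ
        sw.toLinearMap ∘ₗ e1.toLinearMap := by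
    apply LinearMap.ext
    intro v
    funext i
    cases i with
    | inl i =>
        simp [e1, e2, sw, fromBlocks_mulVec, mulVecLin_apply,
          LinearEquiv.sumArrowLequivProdArrow, Equiv.sumArrowEquivProdArrow]
    | inr i =>
        simp [e1, e2, sw, fromBlocks_mulVec, mulVecLin_apply,
          LinearEquiv.sumArrowLequivProdArrow, Equiv.sumArrowEquivProdArrow]
  have hsurj : LinearMap.range (sw.toLinearMap ∘ₗ e1.toLinearMap) = ⊤ :=
    LinearMap.range_eq_top.mpr ((sw.surjective).comp (e1.surjective))
  rw [Matrix.rank, hF]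
  rw [LinearMap.range_comp,
    LinearMap.range_comp_of_range_eq_top _ hsurj, range_prodMap',
    LinearEquiv.finrank_map_eq, finrank_submodule_prod]
  rfl

/-- If A X + Y B + C Z₁ D + F Z₂ G = E is solvable then
rank [E A C; B 0 0; G 0 0] = rank [A C] + rank [B; G]. -/
theorem stmt15 {mm nn p q r s t u : ℕ}
    (E : Matrix (Fin mm) (Fin nn) ℂ)
    (A : Matrix (Fin mm) (Fin p) ℂ) (B : Matrix (Fin q) (Fin nn) ℂ)
    (C : Matrix (Fin mm) (Fin r) ℂ) (D : Matrix (Fin s) (Fin nn) ℂ)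
    (F : Matrix (Fin mm) (Fin t) ℂ) (G : Matrix (Fin u) (Fin nn) ℂ)
    (X : Matrix (Fin p) (Fin nn) ℂ) (Y : Matrix (Fin mm) (Fin q) ℂ)
    (Z₁ : Matrix (Fin r) (Fin s) ℂ) (Z₂ : Matrix (Fin t) (Fin u) ℂ)
    (hsol : A * X + Y * B + C * Z₁ * D + F * Z₂ * G = E) :
    (Matrix.fromBlocks E (Matrix.fromCols A C) (Matrix.fromRows B G) 0).rank
      = (Matrix.fromCols A C).rank + (Matrix.fromRows B G).rank := by
  classical
  set M := Matrix.fromCols A C with hM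
  set N := Matrix.fromRows B G with hN
  set U := Matrix.fromRows X (Z₁ * D) with hU
  set V := Matrix.fromCols Y (F * Z₂) with hV
  have hMU : M * U = A * X + C * (Z₁ * D) := by
    rw [hM, hU, fromCols_mul_fromRows]
  have hVN : V * N = Y * B + (F * Z₂) * G := by
    rw [hV, hN, fromCols_mul_fromRows]
  have hE : E = M * U + V * N := by
    rw [hMU, hVN, ← hsol, Matrix.mul_assoc, Matrix.mul_assoc]
    abel
  set P := Matrix.fromBlocks (1 : Matrix (Fin mm) (Fin mm) ℂ) (-V) 0 (1 : Matrix ((Fin q) ⊕ (Fin u)) ((Fin q) ⊕ (Fin u)) ℂ) with hP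
  set Q := Matrix.fromBlocks (1 : Matrix (Fin nn) (Fin nn) ℂ) 0 (-U) (1 : Matrix ((Fin p) ⊕ (Fin r)) ((Fin p) ⊕ (Fin r)) ℂ) with hQ
  have hPdet : IsUnit P.det := by
    rw [hP, Matrix.det_fromBlocks_zero₂₁]
    simp
  have hQdet : IsUnit Q.det := by
    rw [hQ, Matrix.det_fromBlocks_zero₁₂]
    simp
  have hprod : P * (Matrix.fromBlocks E M N 0) * Q = Matrix.fromBlocks 0 M N 0 := by
    rw [hP, hQ, Matrix.fromBlocks_multiply, Matrix.fromBlocks_multiply]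
    congr 1 <;> simp [hE, Matrix.neg_mul, Matrix.mul_neg]
  calc (Matrix.fromBlocks E M N 0).rank
      = (P * Matrix.fromBlocks E M N 0).rank :=
        (Matrix.rank_mul_eq_right_of_isUnit_det P _ hPdet).symm
    _ = (P * Matrix.fromBlocks E M N 0 * Q).rank :=
        (Matrix.rank_mul_eq_left_of_isUnit_det Q _ hQdet).symm
    _ = (Matrix.fromBlocks 0 M N 0).rank := by rw [hprod]
    _ = M.rank + N.rank := rank_fromBlocks_antidiag M N
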